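/- For integers n ≥ 3 and p with 1 ≤ p ≤ n−2, the star graph maximises the normalised degree variance among perfect quasi-star graphs on n vertices: v̄(G*(n,p)) ≤ v̄(G*(n,1)). -/

import Mathlib

/-- The perfect quasi-star graph `G*(n,p)`: the simple graph on vertex set `{0,…,n-1}`
(a copy of `{1,…,n}`) in which the first `p` vertices (the dominant vertices) are
adjacent to all other vertices and there are no other edges. -/
def quasiStar (n p : ℕ) : SimpleGraph (Fin n) where
  Adj i j := i ≠ j ∧ ((i : ℕ) < p ∨ (j : ℕ) < p)
  symm := ⟨fun _ _ h => ⟨h.1.symm, h.2.symm⟩⟩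
  loopless := ⟨fun _ h => h.1 rfl⟩

instance (n p : ℕ) : DecidableRel (quasiStar n p).Adj :=
  fun i j => inferInstanceAs (Decidable (i ≠ j ∧ ((i : ℕ) < p ∨ (j : ℕ) < p)))

lemma card_filter_lt (n p : ℕ) (hp : p ≤ n) :
    (Finset.univ.filter fun j : Fin n => (j : ℕ) < p).card = p := by
  rw [Finset.card_filter]
  rw [Fin.sum_univ_eq_sum_range (fun k => if k < p then (1:ℕ) else 0)]
  rw [← Finset.card_filter]
  have : (Finset.range n).filter (fun k => k < p) = Finset.range p := by
    ext k; simp; omega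
  rw [this, Finset.card_range]

lemma quasiStar_degree_lt {n p : ℕ} (i : Fin n) (h : (i : ℕ) < p) :
    (quasiStar n p).degree i = n - 1 := by
  rw [← SimpleGraph.card_neighborFinset_eq_degree]
  have he : (quasiStar n p).neighborFinset i = Finset.univ.erase i := by
    ext j
    rw [SimpleGraph.mem_neighborFinset]
    simp only [SimpleGraph.mem_neighborFinset, quasiStar, Finset.mem_erase, Finset.mem_univ,
      and_true]
    constructor
    · rintro ⟨hne, _⟩; exact hne.symm
    · intro hne; exact ⟨hne.symm, Or.inl h⟩
  rw [he, Finset.card_erase_of_mem (Finset.mem_univ i), Finset.card_univ, Fintype.card_fin]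

lemma quasiStar_degree_ge {n p : ℕ} (i : Fin n) (h : p ≤ (i : ℕ)) (hp : p ≤ n) :
    (quasiStar n p).degree i = p := by
  rw [← SimpleGraph.card_neighborFinset_eq_degree]
  have he : (quasiStar n p).neighborFinset i = Finset.univ.filter fun j : Fin n => (j : ℕ) < p := by
    ext j
    rw [SimpleGraph.mem_neighborFinset]
    simp only [SimpleGraph.mem_neighborFinset, quasiStar, Finset.mem_filter, Finset.mem_univ,
      true_and]
    constructor
    · rintro ⟨hne, h1 | h2⟩
      · omega
      · exact h2
    · intro hj
      refine ⟨fun hij => ?_, Or.inr hj⟩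
      rw [hij] at h; omega
  rw [he, card_filter_lt n p hp]

lemma card_nlt (n p : ℕ) (hp : p ≤ n) :
    (Finset.univ.filter fun j : Fin n => ¬ (j : ℕ) < p).card = n - p := by
  rw [Finset.filter_not, Finset.card_sdiff_of_subset (Finset.filter_subset _ _), Finset.card_univ,
    Fintype.card_fin, card_filter_lt n p hp]

lemma quasiStar_sum (n p : ℕ) (hp : p ≤ n) (f : ℕ → ℝ) :
    ∑ i, f ((quasiStar n p).degree i) = p * f (n - 1) + (n - p : ℕ) * f p := by
  rw [← Finset.sum_filter_add_sum_filter_not Finset.univ (fun i : Fin n => (i : ℕ) < p)]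
  have e1 : ∑ i ∈ Finset.univ.filter (fun i : Fin n => (i : ℕ) < p),
      f ((quasiStar n p).degree i) = p * f (n - 1) := by
    calc _ = ∑ _i ∈ Finset.univ.filter (fun i : Fin n => (i : ℕ) < p), f (n - 1) :=
          Finset.sum_congr rfl fun i hi => by
            rw [quasiStar_degree_lt i (Finset.mem_filter.mp hi).2]
      _ = _ := by rw [Finset.sum_const, card_filter_lt n p hp, nsmul_eq_mul]
  have e2 : ∑ i ∈ Finset.univ.filter (fun i : Fin n => ¬ (i : ℕ) < p),
      f ((quasiStar n p).degree i) = (n - p : ℕ) * f p := by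
    calc _ = ∑ _i ∈ Finset.univ.filter (fun i : Fin n => ¬ (i : ℕ) < p), f p :=
          Finset.sum_congr rfl fun i hi => by
            rw [quasiStar_degree_ge i (by simpa using (Finset.mem_filter.mp hi).2) hp]
      _ = _ := by rw [Finset.sum_const, card_nlt n p hp, nsmul_eq_mul]
  rw [e1, e2]

lemma quasiStar_card (n p : ℕ) (hp : p ≤ n) (hn : 1 ≤ n) :
    2 * ((quasiStar n p).edgeFinset.card : ℝ) = p * (2 * n - p - 1) := by
  have hs := (quasiStar n p).sum_degrees_eq_twice_card_edges
  have h2 : ∑ i, (((quasiStar n p).degree i : ℕ) : ℝ)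
      = 2 * ((quasiStar n p).edgeFinset.card : ℝ) := by exact_mod_cast hs
  rw [← h2, quasiStar_sum n p hp (fun k => (k : ℝ))]
  rw [Nat.cast_sub hp, Nat.cast_sub hn]
  push_cast
  ring

/-- The degree variance of a finite simple graph `G` on `n` vertices with `m` edges:
`v(G) = (1/(n-1)) · ∑ i, (k_i - 2m/n)^2`. -/
noncomputable def degVar {n : ℕ} (G : SimpleGraph (Fin n)) [DecidableRel G.Adj] : ℝ :=
  (1 / ((n : ℝ) - 1)) *
    ∑ i, ((G.degree i : ℝ) - 2 * (G.edgeFinset.card : ℝ) / n) ^ 2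

/-- The normalised degree variance `v̄(G) = ((n-1)/(n·m·(1-d))) · v(G)`, where
`d = 2m/(n(n-1))` is the density. -/
noncomputable def normDegVar {n : ℕ} (G : SimpleGraph (Fin n)) [DecidableRel G.Adj] : ℝ :=
  ((n : ℝ) - 1) /
      ((n : ℝ) * (G.edgeFinset.card : ℝ) *
        (1 - 2 * (G.edgeFinset.card : ℝ) / ((n : ℝ) * ((n : ℝ) - 1)))) *
    degVar G

lemma normDegVar_quasiStar_eq (n p : ℕ) (hn : 3 ≤ n) (hp1 : 1 ≤ p) (hp2 : p + 2 ≤ n) :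
    normDegVar (quasiStar n p) =
      2 * ((n : ℝ) - 1) * ((n : ℝ) - p - 1) / ((n : ℝ) * (2 * (n : ℝ) - p - 1)) := by
  have hpn : p ≤ n := by omega
  have hN : (3:ℝ) ≤ (n:ℝ) := by exact_mod_cast hn
  have hP1 : (1:ℝ) ≤ (p:ℝ) := by exact_mod_cast hp1
  have hP2 : (p:ℝ) + 2 ≤ (n:ℝ) := by exact_mod_cast hp2
  set N := (n:ℝ) with hNdef
  set P := (p:ℝ) with hPdef
  have hm : ((quasiStar n p).edgeFinset.card : ℝ) = P * (2*N - P - 1) / 2 := by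
    have := quasiStar_card n p hpn (by omega); linarith
  have hsum : ∑ i, (((quasiStar n p).degree i : ℝ)
        - 2 * ((quasiStar n p).edgeFinset.card : ℝ) / N) ^ 2
      = P * ((N - 1) - 2 * (P*(2*N-P-1)/2) / N)^2
        + (N - P) * (P - 2 * (P*(2*N-P-1)/2) / N)^2 := by
    rw [hm]
    have hq := quasiStar_sum n p hpn (fun k => ((k:ℝ) - 2 * (P*(2*N-P-1)/2) / N)^2)
    rw [hq, Nat.cast_sub hpn, Nat.cast_sub (show 1 ≤ n by omega)]
    push_cast
    ring
  have hN0 : N ≠ 0 := by positivity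
  have hN1 : N - 1 ≠ 0 := by nlinarith
  have hP0 : P ≠ 0 := by positivity
  have h2NP : 2*N - P - 1 ≠ 0 := by nlinarith
  have hNP : N - P ≠ 0 := by nlinarith
  have hNP1 : N - P - 1 ≠ 0 := by nlinarith
  have hd : 1 - 2 * (P * (2*N - P - 1) / 2) / (N * (N - 1))
      = (N - P) * (N - P - 1) / (N * (N - 1)) := by
    field_simp
    ring
  unfold normDegVar degVar
  rw [hsum, hm, hd]
  simp only [← hNdef]
  field_simp
  ring

/-- **The star graph maximises normalised degree variance among perfect quasi-star
graphs.**  For integers `n ≥ 3` and `p` with `1 ≤ p ≤ n - 2`, one has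
`v̄(G*(n,p)) ≤ v̄(G*(n,1))`. -/
theorem normDegVar_quasiStar_le_star (n p : ℕ) (hn : 3 ≤ n)
    (hp1 : 1 ≤ p) (hp2 : p ≤ n - 2) :
    normDegVar (quasiStar n p) ≤ normDegVar (quasiStar n 1) := by
  have hp2' : p + 2 ≤ n := by omega
  rw [normDegVar_quasiStar_eq n p hn hp1 hp2',
    normDegVar_quasiStar_eq n 1 hn le_rfl (by omega)]
  have hN : (3:ℝ) ≤ (n:ℝ) := by exact_mod_cast hn
  have hP1 : (1:ℝ) ≤ (p:ℝ) := by exact_mod_cast hp1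
  have hP2 : (p:ℝ) + 2 ≤ (n:ℝ) := by exact_mod_cast hp2'
  push_cast
  set N := (n:ℝ)
  set P := (p:ℝ)
  rw [div_le_div_iff₀ (by nlinarith) (by nlinarith)]
  have h : 0 ≤ 2 * N * N * (N - 1) * (P - 1) :=
    mul_nonneg (mul_nonneg (mul_nonneg (by linarith) (by linarith)) (by linarith)) (by linarith)
  nlinarith [h]
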